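/- In the transition system of a finite-state PAFAS_s process, an infinite run contains infinitely many 1-steps if and only if it eventually enters and traverses, infinitely often, cycles each containing at least one 1-step; hence a finite-state request-response process has a fair trace with only finitely many out-actions and at least one pending in-action if and only if its reduced transition system contains a catastrophic cycle, i.e., a reachable cycle containing at least one 1-step but no in- or out-transition. -/

import Mathlib

/-- Edge labels of the abstract transition system of a request-response
process: request `inA`, response `outA`, internal `tau`, 1-step `one`. -/
inductive Lab where
  | inA | outA | tau | one
deriving DecidableEq

private lemma succ_mod (a n : ℕ) : (a + 1) % n = (a % n + 1) % n := by
  conv_lhs => rw [Nat.add_mod]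
  conv_rhs => rw [Nat.add_mod, Nat.mod_mod_of_dvd _ dvd_rfl]

/-- in the finite transition system of a request-response
process, a fair run (infinitely many 1-steps) with only finitely many
out-actions and at least one pending in-action — i.e. with finitely many
in/out edges and at least one in edge — exists from the initial state iff some
catastrophic cycle (a reachable cycle with a 1-step edge but no in- or
out-edge) is reachable via a path performing an in-action. -/
theorem liveness_violation_iff_catastrophic_cycle {V : Type} [Fintype V]
    (E : V → Lab → V → Prop) (v0 : V) :
    (∃ (f : ℕ → V) (ℓ : ℕ → Lab), f 0 = v0 ∧
      (∀ n, E (f n) (ℓ n) (f (n + 1))) ∧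
      {n | ℓ n = Lab.one}.Infinite ∧
      {n | ℓ n = Lab.inA ∨ ℓ n = Lab.outA}.Finite ∧
      (∃ n, ℓ n = Lab.inA)) ↔
    (∃ (c : V) (m : ℕ) (p : ℕ → V) (lp : ℕ → Lab),
      p 0 = v0 ∧ p m = c ∧ (∀ i < m, E (p i) (lp i) (p (i + 1))) ∧
      (∃ i < m, lp i = Lab.inA) ∧
      (∃ (n : ℕ) (g : ℕ → V) (ℓ : ℕ → Lab), 0 < n ∧ g 0 = c ∧ g n = c ∧
        (∀ i < n, E (g i) (ℓ i) (g (i + 1)) ∧ ℓ i ≠ Lab.inA ∧ ℓ i ≠ Lab.outA) ∧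
        (∃ i < n, ℓ i = Lab.one))) := by
  constructor
  · rintro ⟨f, ℓ, hf0, hE, hone, hfin, n0, hn0⟩
    -- bound on in/out indices
    obtain ⟨B, hB⟩ := hfin.bddAbove
    set N : ℕ := max (n0 + 1) (B + 1) with hN
    have hno : ∀ n, N ≤ n → ℓ n ≠ Lab.inA ∧ ℓ n ≠ Lab.outA := by
      intro n hn
      constructor <;> intro h <;>
      · have : n ≤ B := hB (by simp [h])
        omega
    -- infinite set of `one`-steps past N
    set S : Set ℕ := {n | ℓ n = Lab.one} \ Set.Iio N with hS
    have hSinf : S.Infinite := hone.diff (Set.finite_Iio N)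
    have hninj : ¬ Set.InjOn f S := by
      intro h
      exact hSinf (Set.Finite.of_finite_image (Set.toFinite _) h)
    rw [Set.InjOn] at hninj
    push_neg at hninj
    obtain ⟨a, ha, b, hb, hab, hne⟩ := hninj
    -- wlog a < b
    obtain ⟨k1, k2, hk12, hk1, hk2, hkeq⟩ :
        ∃ k1 k2, k1 < k2 ∧ k1 ∈ S ∧ k2 ∈ S ∧ f k1 = f k2 := by
      rcases lt_or_gt_of_ne hne with h | h
      · exact ⟨a, b, h, ha, hb, hab⟩
      · exact ⟨b, a, h, hb, ha, hab.symm⟩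
    obtain ⟨hk1one, hk1N⟩ := hk1
    simp only [Set.mem_Iio, not_lt] at hk1N
    refine ⟨f k1, k1, f, ℓ, hf0, rfl, fun i _ => hE i, ⟨n0, by omega, hn0⟩,
      k2 - k1, fun i => f (k1 + i), fun i => ℓ (k1 + i), by omega, rfl, ?_, ?_, ?_⟩
    · show f (k1 + (k2 - k1)) = f k1
      rw [Nat.add_sub_cancel' (le_of_lt hk12)]; exact hkeq.symm
    · intro i hi
      exact ⟨hE _, (hno _ (by omega)).1, (hno _ (by omega)).2⟩
    · exact ⟨0, by omega, by simpa using hk1one⟩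
  · rintro ⟨c, m, p, lp, hp0, hpm, hpE, ⟨i0, hi0m, hi0⟩,
      n, g, ℓc, hn, hg0, hgn, hgE, j0, hj0n, hj0⟩
    -- run: prefix then loop forever
    set f : ℕ → V := fun i => if i < m then p i else g ((i - m) % n) with hf
    set L : ℕ → Lab := fun i => if i < m then lp i else ℓc ((i - m) % n) with hL
    have hcyc : ∀ r, g (r % n) = g r ∨ True := fun _ => Or.inr trivial
    have hfm : ∀ i, m ≤ i → f i = g ((i - m) % n) := by
      intro i hi; simp [hf, Nat.not_lt.mpr hi]
    have hgmod : ∀ r < n, g ((r + 1) % n) = g (r + 1) := by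
      intro r hr
      rcases Nat.lt_or_ge (r + 1) n with h | h
      · rw [Nat.mod_eq_of_lt h]
      · have : r + 1 = n := by omega
        rw [this, Nat.mod_self, hg0, hgn]
    refine ⟨f, L, ?_, ?_, ?_, ?_, ?_⟩
    · rcases Nat.eq_zero_or_pos m with h | h
      · subst h; simp [hf, hg0, ← hp0, ← hpm]
      · simp [hf, h, hp0]
    · intro i
      rcases Nat.lt_or_ge i m with h | h
      · have hLi : L i = lp i := by simp [hL, h]
        have hfi : f i = p i := by simp [hf, h]
        have hfi1 : f (i + 1) = p (i + 1) := by
          rcases Nat.lt_or_ge (i + 1) m with h1 | h1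
          · simp [hf, h1]
          · have : i + 1 = m := by omega
            rw [this] at h1 ⊢
            simp [hf, hg0, hpm]
        rw [hLi, hfi, hfi1]
        exact hpE i h
      · set r := (i - m) % n with hr
        have hrn : r < n := Nat.mod_lt _ hn
        have hfi : f i = g r := hfm i h
        have hLi : L i = ℓc r := by simp [hL, Nat.not_lt.mpr h, hr]
        have hfi1 : f (i + 1) = g (r + 1) := by
          rw [hfm (i + 1) (by omega)]
          have : i + 1 - m = (i - m) + 1 := by omega
          rw [this, succ_mod, ← hr, hgmod r hrn]
        rw [hfi, hLi, hfi1]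
        exact (hgE r hrn).1
    · refine Set.infinite_of_injective_forall_mem
        (f := fun k : ℕ => m + j0 + k * n) ?_ ?_
      · intro a b hab
        simp only at hab
        have : a * n = b * n := by omega
        exact Nat.eq_of_mul_eq_mul_right hn this
      · intro k
        have h1 : ¬ (m + j0 + k * n < m) := by omega
        have h2 : m + j0 + k * n - m = j0 + k * n := by omega
        simp only [Set.mem_setOf_eq, hL, if_neg h1, h2,
          Nat.add_mul_mod_self_right, Nat.mod_eq_of_lt hj0n]
        exact hj0
    · apply Set.Finite.subset (Set.finite_Iio m)
      intro j hj
      simp only [Set.mem_setOf_eq] at hj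
      by_contra hjm
      simp only [Set.mem_Iio, not_lt] at hjm
      have hLj : L j = ℓc ((j - m) % n) := by simp [hL, Nat.not_lt.mpr hjm]
      have hrn : (j - m) % n < n := Nat.mod_lt _ hn
      rcases hj with h | h
      · exact (hgE _ hrn).2.1 (hLj ▸ h)
      · exact (hgE _ hrn).2.2 (hLj ▸ h)
    · exact ⟨i0, by simp [hL, hi0m, hi0]⟩
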